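/- arXiv:1810.07325 — 3 statements merged into one kernel-verified Lean document; each statement's English description precedes it below -/
import Mathlib

section
/- Let n ≥ 1, let R be an algebraic Chern curvature tensor on ℂⁿ that is Griffiths non-positive, and let ε ≥ 0. Set R^ε := R − ε·B. Then for all u, v ∈ ℂⁿ and every unit vector x ∈ ℂⁿ (‖x‖ = 1): |R^ε(u,v̄,x,x̄)|² ≤ Ric^ε(u,ū) · Ric^ε(v,v̄). -/
open Complex BigOperators

/-- The quartic curvature contraction R(u, v̄, x, ȳ). -/
noncomputable def chernQuad {n : ℕ} (R : Fin n → Fin n → Fin n → Fin n → ℂ)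
    (u v x y : EuclideanSpace ℂ (Fin n)) : ℂ :=
  ∑ i, ∑ j, ∑ k, ∑ l,
    R i j k l * u i * (starRingEnd ℂ) (v j) * x k * (starRingEnd ℂ) (y l)

/-- The tensor B_{i j̄ k l̄} = g_{i j̄} g_{k l̄} + g_{i l̄} g_{k j̄} for the standard metric. -/
noncomputable def chernB {n : ℕ} (i j k l : Fin n) : ℂ :=
  (if i = j then 1 else 0) * (if k = l then 1 else 0) +
    (if i = l then 1 else 0) * (if k = j then 1 else 0)

/-- The first Ricci form Ric(X, X̄) = Re ∑ₖ R(X, X̄, eₖ, ēₖ). -/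
noncomputable def chernRic {n : ℕ} (R : Fin n → Fin n → Fin n → Fin n → ℂ)
    (X : EuclideanSpace ℂ (Fin n)) : ℝ :=
  (∑ k, chernQuad R X X (EuclideanSpace.single k 1) (EuclideanSpace.single k 1)).re

namespace ChernCSAux

variable {n : ℕ}

lemma sum3_comm (g : Fin n → Fin n → Fin n → ℂ) :
    ∑ a, ∑ b, ∑ c, g a b c = ∑ c, ∑ a, ∑ b, g a b c := by
  rw [show (∑ a, ∑ b, ∑ c, g a b c) = ∑ a, ∑ c, ∑ b, g a b c from
    Finset.sum_congr rfl fun a _ => Finset.sum_comm, Finset.sum_comm]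

lemma sum4_comm (f : Fin n → Fin n → Fin n → Fin n → ℂ) :
    ∑ i, ∑ j, ∑ k, ∑ l, f i j k l = ∑ k, ∑ l, ∑ i, ∑ j, f i j k l := by
  have h1 : ∀ i, ∑ j, ∑ k, ∑ l, f i j k l = ∑ k, ∑ l, ∑ j, f i j k l := by
    intro i; rw [sum3_comm, sum3_comm]
  simp only [h1]
  rw [Finset.sum_comm]
  exact Finset.sum_congr rfl fun k _ => Finset.sum_comm

lemma sum_factor (f g : Fin n → Fin n → ℂ) :
    ∑ i, ∑ j, ∑ k, ∑ l, f i j * g k l = (∑ i, ∑ j, f i j) * (∑ k, ∑ l, g k l) := by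
  rw [Finset.sum_mul]
  refine Finset.sum_congr rfl fun i _ => ?_
  rw [Finset.sum_mul]
  refine Finset.sum_congr rfl fun j _ => ?_
  rw [Finset.mul_sum]
  exact Finset.sum_congr rfl fun k _ => by rw [Finset.mul_sum]

lemma diag_collapse (X Y : Fin n → ℂ) :
    ∑ i, ∑ j, (if i = j then (1:ℂ) else 0) * X i * (starRingEnd ℂ) (Y j)
      = ∑ i, X i * (starRingEnd ℂ) (Y i) := by
  refine Finset.sum_congr rfl fun i _ => ?_
  simp only [ite_mul, one_mul, zero_mul, Finset.sum_ite_eq, Finset.mem_univ, if_true]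

/-- Cauchy–Schwarz for a negative semidefinite Hermitian matrix form. -/
lemma lemB (N : Fin n → Fin n → ℂ)
    (hherm : ∀ i j, (starRingEnd ℂ) (N i j) = N j i)
    (hneg : ∀ y : Fin n → ℂ, (∑ i, ∑ j, N i j * y i * (starRingEnd ℂ) (y j)).re ≤ 0)
    (u v : Fin n → ℂ) :
    ‖∑ i, ∑ j, N i j * u i * (starRingEnd ℂ) (v j)‖ ^ 2 ≤
      (∑ i, ∑ j, N i j * u i * (starRingEnd ℂ) (u j)).re *
        (∑ i, ∑ j, N i j * v i * (starRingEnd ℂ) (v j)).re := by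
  set c := ∑ i, ∑ j, N i j * u i * (starRingEnd ℂ) (v j) with hc
  set Gu := ∑ i, ∑ j, N i j * u i * (starRingEnd ℂ) (u j) with hGu
  set Gv := ∑ i, ∑ j, N i j * v i * (starRingEnd ℂ) (v j) with hGv
  have hconjc : (starRingEnd ℂ) c = ∑ i, ∑ j, N i j * v i * (starRingEnd ℂ) (u j) := by
    rw [hc, map_sum]
    rw [Finset.sum_comm]
    refine Finset.sum_congr rfl fun j _ => ?_
    rw [map_sum]
    refine Finset.sum_congr rfl fun i _ => ?_
    simp only [map_mul, hherm, RingHom.id_apply, starRingEnd_self_apply]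
    ring
  have expand : ∀ t : ℂ, (∑ i, ∑ j, N i j * (u i + t * v i) *
      (starRingEnd ℂ) (u j + t * v j)) =
      Gu + (starRingEnd ℂ) t * c + t * (starRingEnd ℂ) c + t * (starRingEnd ℂ) t * Gv := by
    intro t
    have : ∀ i j, N i j * (u i + t * v i) * (starRingEnd ℂ) (u j + t * v j) =
        N i j * u i * (starRingEnd ℂ) (u j) +
        (starRingEnd ℂ) t * (N i j * u i * (starRingEnd ℂ) (v j)) +
        t * (N i j * v i * (starRingEnd ℂ) (u j)) +
        t * (starRingEnd ℂ) t * (N i j * v i * (starRingEnd ℂ) (v j)) := by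
      intro i j
      simp only [map_add, map_mul]
      ring
    simp only [this, Finset.sum_add_distrib, ← Finset.mul_sum]
    rw [hconjc]
  have key : ∀ r : ℝ, Gu.re + 2 * r * ‖c‖ ^ 2 + r ^ 2 * ‖c‖ ^ 2 * Gv.re ≤ 0 := by
    intro r
    have h := hneg (fun i => u i + ((r : ℂ) * c) * v i)
    rw [expand ((r : ℂ) * c)] at h
    have e1 : ((starRingEnd ℂ) ((r : ℂ) * c) * c).re = r * ‖c‖ ^ 2 := by
      simp only [map_mul, Complex.conj_ofReal]
      rw [mul_assoc, mul_comm ((starRingEnd ℂ) c) c, Complex.mul_conj]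
      simp [Complex.sq_norm]
    have e2 : (((r : ℂ) * c) * (starRingEnd ℂ) c).re = r * ‖c‖ ^ 2 := by
      rw [mul_assoc, Complex.mul_conj]
      simp [Complex.sq_norm]
    have e3 : (((r : ℂ) * c) * (starRingEnd ℂ) ((r : ℂ) * c) * Gv).re
        = r ^ 2 * ‖c‖ ^ 2 * Gv.re := by
      have h4 : ((r : ℂ) * c) * (starRingEnd ℂ) ((r : ℂ) * c) =
          ((r ^ 2 * ‖c‖ ^ 2 : ℝ) : ℂ) := by
        simp only [map_mul, Complex.conj_ofReal]
        rw [show (r:ℂ) * c * ((r:ℂ) * (starRingEnd ℂ) c) = (r:ℂ)*(r:ℂ)*(c * (starRingEnd ℂ) c) by ring,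
          Complex.mul_conj, ← Complex.sq_norm]
        push_cast
        ring
      rw [h4, Complex.re_ofReal_mul]
    rw [Complex.add_re, Complex.add_re, Complex.add_re, e1, e2, e3] at h
    linarith
  have hGu0 : Gu.re ≤ 0 := hneg u
  have hGv0 : Gv.re ≤ 0 := hneg v
  set K := ‖c‖ ^ 2 with hK
  have hK0 : 0 ≤ K := by positivity
  rcases eq_or_lt_of_le hK0 with h0 | hpos
  · rw [← h0]; nlinarith [mul_nonneg (neg_nonneg.2 hGu0) (neg_nonneg.2 hGv0)]
  · rcases eq_or_lt_of_le hGv0 with hv0 | hvneg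
    · exfalso
      have hKne : K ≠ 0 := ne_of_gt hpos
      have hr : 2 * ((1 - Gu.re)/(2*K)) * K = 1 - Gu.re := by field_simp
      have hk2 := key ((1 - Gu.re)/(2*K))
      rw [hv0] at hk2
      rw [mul_zero] at hk2
      linarith [hr]
    · have := key (-1 / Gv.re)
      have hvne : Gv.re ≠ 0 := ne_of_lt hvneg
      have h1 : 2 * (-1 / Gv.re) * K = -(2 * (K / Gv.re)) := by field_simp
      have h2 : (-1 / Gv.re) ^ 2 * K * Gv.re = K / Gv.re := by field_simp
      rw [h1, h2] at this
      have h5 : Gu.re ≤ K / Gv.re := by linarith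
      have h6 := mul_le_mul_of_nonpos_right h5 (le_of_lt hvneg)
      rw [div_mul_cancel₀ _ hvne] at h6
      linarith

/-- Trace of a negative semidefinite form is at most its value at a unit vector. -/
lemma lemA (M : Fin n → Fin n → ℂ) (x : Fin n → ℂ)
    (hx : ∑ k, x k * (starRingEnd ℂ) (x k) = 1)
    (hneg : ∀ y : Fin n → ℂ, (∑ k, ∑ l, M k l * y k * (starRingEnd ℂ) (y l)).re ≤ 0) :
    (∑ k, M k k).re ≤ (∑ k, ∑ l, M k l * x k * (starRingEnd ℂ) (x l)).re := by
  set G := fun y : Fin n → ℂ => ∑ k, ∑ l, M k l * y k * (starRingEnd ℂ) (y l) with hG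
  set w := fun k : Fin n => fun p : Fin n =>
    (if p = k then (1:ℂ) else 0) - (starRingEnd ℂ) (x k) * x p with hw
  have key : ∀ k, G (w k) =
      M k k - x k * (∑ q, M k q * (starRingEnd ℂ) (x q))
        - (starRingEnd ℂ) (x k) * (∑ p, M p k * x p)
        + (x k * (starRingEnd ℂ) (x k)) * G x := by
    intro k
    have hterm : ∀ p q, M p q * (w k p) * (starRingEnd ℂ) (w k q) =
        M p q * (if p = k then (1:ℂ) else 0) * (if q = k then (1:ℂ) else 0)
        - x k * (M p q * (if p = k then (1:ℂ) else 0) * (starRingEnd ℂ) (x q))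
        - (starRingEnd ℂ) (x k) * (M p q * x p * (if q = k then (1:ℂ) else 0))
        + (x k * (starRingEnd ℂ) (x k)) * (M p q * x p * (starRingEnd ℂ) (x q)) := by
      intro p q
      simp only [hw, map_sub, map_mul, map_one, map_zero, apply_ite (starRingEnd ℂ),
        RingHom.id_apply, starRingEnd_self_apply]
      ring
    calc G (w k) = ∑ p, ∑ q, (M p q * (if p = k then (1:ℂ) else 0) * (if q = k then (1:ℂ) else 0)
        - x k * (M p q * (if p = k then (1:ℂ) else 0) * (starRingEnd ℂ) (x q))
        - (starRingEnd ℂ) (x k) * (M p q * x p * (if q = k then (1:ℂ) else 0))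
        + (x k * (starRingEnd ℂ) (x k)) * (M p q * x p * (starRingEnd ℂ) (x q))) := by
          rw [hG]
          exact Finset.sum_congr rfl fun p _ => Finset.sum_congr rfl fun q _ => hterm p q
      _ = M k k - x k * (∑ q, M k q * (starRingEnd ℂ) (x q))
        - (starRingEnd ℂ) (x k) * (∑ p, M p k * x p)
        + (x k * (starRingEnd ℂ) (x k)) * G x := by
          simp only [Finset.sum_add_distrib, Finset.sum_sub_distrib, ← Finset.mul_sum, hG]
          congr 2
          · congr 1
            · simp [Finset.sum_ite_eq', mul_ite, ite_mul]
            · congr 1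
              rw [Finset.sum_comm]
              simp [Finset.sum_ite_eq', mul_ite, ite_mul]
          · rw [Finset.sum_comm]
            simp [Finset.sum_ite_eq', mul_ite, ite_mul]
  have hsum : ∑ k, G (w k) = (∑ k, M k k) - G x := by
    rw [show (∑ k, G (w k)) = ∑ k, (M k k - x k * (∑ q, M k q * (starRingEnd ℂ) (x q))
        - (starRingEnd ℂ) (x k) * (∑ p, M p k * x p)
        + (x k * (starRingEnd ℂ) (x k)) * G x) from Finset.sum_congr rfl fun k _ => key k]
    rw [Finset.sum_add_distrib, Finset.sum_sub_distrib, Finset.sum_sub_distrib,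
      ← Finset.sum_mul, hx, one_mul]
    have e1 : ∑ k, x k * (∑ q, M k q * (starRingEnd ℂ) (x q)) = G x := by
      rw [hG]
      refine Finset.sum_congr rfl fun k _ => ?_
      rw [Finset.mul_sum]
      exact Finset.sum_congr rfl fun q _ => by ring
    have e2 : ∑ k, (starRingEnd ℂ) (x k) * (∑ p, M p k * x p) = G x := by
      calc ∑ k, (starRingEnd ℂ) (x k) * (∑ p, M p k * x p)
          = ∑ k, ∑ p, M p k * x p * (starRingEnd ℂ) (x k) := by
            refine Finset.sum_congr rfl fun k _ => ?_
            rw [Finset.mul_sum]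
            exact Finset.sum_congr rfl fun p _ => by ring
        _ = ∑ p, ∑ k, M p k * x p * (starRingEnd ℂ) (x k) := by
            rw [Finset.sum_comm]
        _ = G x := rfl
    rw [e1, e2]
    ring
  have h1 : (∑ k, G (w k)).re ≤ 0 := by
    rw [Complex.re_sum]
    exact Finset.sum_nonpos fun k _ => hneg (w k)
  rw [hsum, Complex.sub_re] at h1
  linarith

/-- Main auxiliary statement for a symmetric Griffiths-nonpositive tensor. -/
lemma mainAux (S : Fin n → Fin n → Fin n → Fin n → ℂ)
    (hS : ∀ i j k l, (starRingEnd ℂ) (S i j k l) = S j i l k)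
    (hSG : ∀ X Y : EuclideanSpace ℂ (Fin n), (chernQuad S X X Y Y).re ≤ 0)
    (u v x : EuclideanSpace ℂ (Fin n))
    (hx1 : ∑ k, x k * (starRingEnd ℂ) (x k) = 1) :
    ‖chernQuad S u v x x‖ ^ 2 ≤ chernRic S u * chernRic S v := by
  classical
  set N := fun i j => ∑ k, ∑ l, S i j k l * x k * (starRingEnd ℂ) (x l) with hN
  have claimN : ∀ a b : EuclideanSpace ℂ (Fin n),
      chernQuad S a b x x = ∑ i, ∑ j, N i j * a i * (starRingEnd ℂ) (b j) := by
    intro a b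
    unfold chernQuad
    refine Finset.sum_congr rfl fun i _ => Finset.sum_congr rfl fun j _ => ?_
    rw [hN]
    simp only [Finset.sum_mul]
    exact Finset.sum_congr rfl fun k _ => Finset.sum_congr rfl fun l _ => by ring
  have hermN : ∀ i j, (starRingEnd ℂ) (N i j) = N j i := by
    intro i j
    rw [hN]
    calc (starRingEnd ℂ) (∑ k, ∑ l, S i j k l * x k * (starRingEnd ℂ) (x l))
        = ∑ k, ∑ l, S j i l k * (starRingEnd ℂ) (x k) * x l := by
          rw [map_sum]
          refine Finset.sum_congr rfl fun k _ => ?_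
          rw [map_sum]
          refine Finset.sum_congr rfl fun l _ => ?_
          simp only [map_mul, hS, RingHom.id_apply, starRingEnd_self_apply]
      _ = ∑ l, ∑ k, S j i l k * (starRingEnd ℂ) (x k) * x l := Finset.sum_comm
      _ = ∑ l, ∑ k, S j i l k * x l * (starRingEnd ℂ) (x k) :=
          Finset.sum_congr rfl fun l _ => Finset.sum_congr rfl fun k _ => by ring
  have negN : ∀ y : Fin n → ℂ, (∑ i, ∑ j, N i j * y i * (starRingEnd ℂ) (y j)).re ≤ 0 := by
    intro y
    have h := hSG ((WithLp.equiv 2 (∀ _ : Fin n, ℂ)).symm y) x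
    rw [claimN ((WithLp.equiv 2 (∀ _ : Fin n, ℂ)).symm y) ((WithLp.equiv 2 (∀ _ : Fin n, ℂ)).symm y)] at h
    simpa using h
  -- the diagonal-pair matrix for a fixed first argument
  have claimM : ∀ (X : EuclideanSpace ℂ (Fin n)) (y z : EuclideanSpace ℂ (Fin n)),
      chernQuad S X X y z = ∑ k, ∑ l,
        (∑ i, ∑ j, S i j k l * X i * (starRingEnd ℂ) (X j)) * y k * (starRingEnd ℂ) (z l) := by
    intro X y z
    unfold chernQuad
    rw [sum4_comm]
    refine Finset.sum_congr rfl fun k _ => Finset.sum_congr rfl fun l _ => ?_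
    simp only [Finset.sum_mul]
  have negM : ∀ (X : EuclideanSpace ℂ (Fin n)) (y : Fin n → ℂ),
      (∑ k, ∑ l, (∑ i, ∑ j, S i j k l * X i * (starRingEnd ℂ) (X j)) * y k *
        (starRingEnd ℂ) (y l)).re ≤ 0 := by
    intro X y
    have h := hSG X ((WithLp.equiv 2 (∀ _ : Fin n, ℂ)).symm y)
    rw [claimM] at h
    simpa using h
  have ricEq : ∀ X : EuclideanSpace ℂ (Fin n),
      chernRic S X = (∑ k, ∑ i, ∑ j, S i j k k * X i * (starRingEnd ℂ) (X j)).re := by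
    intro X
    unfold chernRic
    congr 1
    refine Finset.sum_congr rfl fun k _ => ?_
    rw [claimM]
    rw [Finset.sum_eq_single k]
    · rw [Finset.sum_eq_single k]
      · simp [EuclideanSpace.single_apply]
      · intro b _ hb
        simp [EuclideanSpace.single_apply, hb]
      · intro h; exact absurd (Finset.mem_univ k) h
    · intro b _ hb
      rw [Finset.sum_eq_single k]
      · simp [EuclideanSpace.single_apply, hb]
      · intro b' _ hb'
        simp [EuclideanSpace.single_apply, hb']
      · intro h; exact absurd (Finset.mem_univ k) h
    · intro h; exact absurd (Finset.mem_univ k) h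
  have ricLe : ∀ X : EuclideanSpace ℂ (Fin n),
      chernRic S X ≤ (chernQuad S X X x x).re := by
    intro X
    have h := lemA (fun k l => ∑ i, ∑ j, S i j k l * X i * (starRingEnd ℂ) (X j))
      (fun k => x k) hx1 (negM X)
    rw [ricEq X, claimM X x x]
    exact h
  have cs := lemB N hermN negN (fun i => u i) (fun i => v i)
  rw [← claimN u v, ← claimN u u, ← claimN v v] at cs
  have hu0 : (chernQuad S u u x x).re ≤ 0 := hSG u x
  have hv0 : (chernQuad S v v x x).re ≤ 0 := hSG v x
  have hu := ricLe u
  have hv := ricLe v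
  have h7 : (chernQuad S u u x x).re * (chernQuad S v v x x).re ≤
      (chernQuad S u u x x).re * chernRic S v :=
    mul_le_mul_of_nonpos_left hv hu0
  have h8 : (chernQuad S u u x x).re * chernRic S v ≤ chernRic S u * chernRic S v :=
    mul_le_mul_of_nonpos_right hu (le_trans hv hv0)
  linarith

lemma chernB_conj (i j k l : Fin n) :
    (starRingEnd ℂ) (chernB i j k l) = chernB j i l k := by
  unfold chernB
  have hc : ∀ a b : Fin n, (if a = b then (1:ℂ) else 0) = (if b = a then 1 else 0) := by
    intro a b; simp [eq_comm]
  rw [map_add, map_mul, map_mul]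
  simp only [apply_ite (starRingEnd ℂ), map_one, map_zero]
  rw [hc i j, hc k l, hc i l, hc k j]
  ring

lemma chernB_quad (X Y : EuclideanSpace ℂ (Fin n)) :
    chernQuad (fun i j k l => chernB i j k l) X X Y Y =
      (∑ i, X i * (starRingEnd ℂ) (X i)) * (∑ k, Y k * (starRingEnd ℂ) (Y k)) +
      (∑ i, X i * (starRingEnd ℂ) (Y i)) * (∑ k, Y k * (starRingEnd ℂ) (X k)) := by
  unfold chernQuad chernB
  have hsplit : ∀ i j k l : Fin n,
      ((if i = j then (1:ℂ) else 0) * (if k = l then 1 else 0) +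
        (if i = l then 1 else 0) * (if k = j then 1 else 0)) * X i * (starRingEnd ℂ) (X j)
        * Y k * (starRingEnd ℂ) (Y l) =
      (if i = j then (1:ℂ) else 0) * (if k = l then 1 else 0) * X i * (starRingEnd ℂ) (X j)
        * Y k * (starRingEnd ℂ) (Y l) +
      (if i = l then (1:ℂ) else 0) * (if k = j then 1 else 0) * X i * (starRingEnd ℂ) (X j)
        * Y k * (starRingEnd ℂ) (Y l) := by
    intro i j k l; ring
  simp only [hsplit, Finset.sum_add_distrib]
  congr 1
  · rw [show (∑ i, ∑ j, ∑ k, ∑ l, (if i = j then (1:ℂ) else 0) * (if k = l then 1 else 0) * X i *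
        (starRingEnd ℂ) (X j) * Y k * (starRingEnd ℂ) (Y l)) =
        ∑ i, ∑ j, ∑ k, ∑ l, ((if i = j then (1:ℂ) else 0) * X i * (starRingEnd ℂ) (X j)) *
          ((if k = l then (1:ℂ) else 0) * Y k * (starRingEnd ℂ) (Y l)) from
      Finset.sum_congr rfl fun i _ => Finset.sum_congr rfl fun j _ =>
        Finset.sum_congr rfl fun k _ => Finset.sum_congr rfl fun l _ => by ring]
    rw [sum_factor, diag_collapse, diag_collapse]
  · have swap : ∀ h : Fin n → Fin n → Fin n → Fin n → ℂ,
        ∑ i, ∑ j, ∑ k, ∑ l, h i j k l = ∑ i, ∑ l, ∑ k, ∑ j, h i j k l := by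
      intro h
      refine Finset.sum_congr rfl fun i _ => ?_
      rw [sum3_comm]
      exact Finset.sum_congr rfl fun l _ => Finset.sum_comm
    rw [swap]
    rw [show (∑ i, ∑ l, ∑ k, ∑ j, (if i = l then (1:ℂ) else 0) * (if k = j then 1 else 0) * X i *
        (starRingEnd ℂ) (X j) * Y k * (starRingEnd ℂ) (Y l)) =
        ∑ i, ∑ l, ∑ k, ∑ j, ((if i = l then (1:ℂ) else 0) * X i * (starRingEnd ℂ) (Y l)) *
          ((if k = j then (1:ℂ) else 0) * Y k * (starRingEnd ℂ) (X j)) from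
      Finset.sum_congr rfl fun i _ => Finset.sum_congr rfl fun l _ =>
        Finset.sum_congr rfl fun k _ => Finset.sum_congr rfl fun j _ => by ring]
    rw [sum_factor, diag_collapse, diag_collapse]

lemma chernQuad_split (R : Fin n → Fin n → Fin n → Fin n → ℂ) (ε : ℝ)
    (a b c d : EuclideanSpace ℂ (Fin n)) :
    chernQuad (fun i j k l => R i j k l - ε * chernB i j k l) a b c d =
      chernQuad R a b c d - (ε : ℂ) * chernQuad (fun i j k l => chernB i j k l) a b c d := by
  unfold chernQuad
  have : ∀ i j k l : Fin n, (R i j k l - (ε:ℂ) * chernB i j k l) * a i * (starRingEnd ℂ) (b j)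
      * c k * (starRingEnd ℂ) (d l) =
      R i j k l * a i * (starRingEnd ℂ) (b j) * c k * (starRingEnd ℂ) (d l) -
      (ε:ℂ) * (chernB i j k l * a i * (starRingEnd ℂ) (b j) * c k * (starRingEnd ℂ) (d l)) := by
    intro i j k l; ring
  simp only [this, Finset.sum_sub_distrib, ← Finset.mul_sum]

end ChernCSAux

theorem cauchy_schwarz_ricci_eps {n : ℕ} (hn : 1 ≤ n)
    (R : Fin n → Fin n → Fin n → Fin n → ℂ)
    (hsym : ∀ i j k l, (starRingEnd ℂ) (R i j k l) = R j i l k)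
    (hGriffiths : ∀ X Y : EuclideanSpace ℂ (Fin n), (chernQuad R X X Y Y).re ≤ 0)
    (ε : ℝ) (hε : 0 ≤ ε)
    (u v x : EuclideanSpace ℂ (Fin n)) (hx : ‖x‖ = 1) :
    ‖chernQuad (fun i j k l => R i j k l - ε * chernB i j k l) u v x x‖ ^ 2 ≤
      chernRic (fun i j k l => R i j k l - ε * chernB i j k l) u *
        chernRic (fun i j k l => R i j k l - ε * chernB i j k l) v := by
  classical
  apply ChernCSAux.mainAux
  · intro i j k l
    rw [map_sub, hsym, map_mul, ChernCSAux.chernB_conj, Complex.conj_ofReal]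
  · intro X Y
    rw [ChernCSAux.chernQuad_split, ChernCSAux.chernB_quad]
    have e1 : ∑ i, X i * (starRingEnd ℂ) (X i) = ((∑ i, Complex.normSq (X i) : ℝ) : ℂ) := by
      push_cast
      exact Finset.sum_congr rfl fun i _ => Complex.mul_conj (X i)
    have e2 : ∑ k, Y k * (starRingEnd ℂ) (Y k) = ((∑ k, Complex.normSq (Y k) : ℝ) : ℂ) := by
      push_cast
      exact Finset.sum_congr rfl fun k _ => Complex.mul_conj (Y k)
    have e3 : ∑ k, Y k * (starRingEnd ℂ) (X k) =
        (starRingEnd ℂ) (∑ i, X i * (starRingEnd ℂ) (Y i)) := by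
      rw [map_sum]
      refine Finset.sum_congr rfl fun i _ => ?_
      rw [map_mul, starRingEnd_self_apply]
      ring
    rw [e1, e2, e3, Complex.mul_conj]
    rw [Complex.sub_re]
    have h9 : ((ε:ℂ) * ((((∑ i, Complex.normSq (X i) : ℝ) : ℂ)) * (((∑ k, Complex.normSq (Y k) : ℝ) : ℂ))
        + ((Complex.normSq (∑ i, X i * (starRingEnd ℂ) (Y i)) : ℝ) : ℂ))).re =
        ε * ((∑ i, Complex.normSq (X i)) * (∑ k, Complex.normSq (Y k))
          + Complex.normSq (∑ i, X i * (starRingEnd ℂ) (Y i))) := by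
      push_cast
      rw [Complex.re_ofReal_mul]
      norm_cast
    rw [h9]
    have hnn : 0 ≤ ε * ((∑ i, Complex.normSq (X i)) * (∑ k, Complex.normSq (Y k))
        + Complex.normSq (∑ i, X i * (starRingEnd ℂ) (Y i))) := by
      apply mul_nonneg hε
      apply add_nonneg
      · exact mul_nonneg (Finset.sum_nonneg fun i _ => Complex.normSq_nonneg _)
          (Finset.sum_nonneg fun k _ => Complex.normSq_nonneg _)
      · exact Complex.normSq_nonneg _
    linarith [hGriffiths X Y]
  · -- unit vector
    have h2 : ∑ k, x k * (starRingEnd ℂ) (x k) = ((‖x‖ ^ 2 : ℝ) : ℂ) := by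
      rw [EuclideanSpace.norm_eq, Real.sq_sqrt (Finset.sum_nonneg fun i _ => sq_nonneg _)]
      push_cast
      refine Finset.sum_congr rfl fun k _ => ?_
      rw [Complex.mul_conj, Complex.normSq_eq_norm_sq]
      push_cast
      ring
    rw [h2, hx]
    norm_num
end

section
/- Let n ≥ 2, let R be an algebraic Chern curvature tensor on ℂⁿ that is Griffiths non-positive, and let ε > 0. Set R^ε := R − ε·B. Then for all nonzero u, v ∈ ℂⁿ and every unit vector x ∈ ℂⁿ (‖x‖ = 1), the strict inequality holds: |R^ε(u,v̄,x,x̄)|² < Ric^ε(u,ū) · Ric^ε(v,v̄). -/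
open Complex BigOperators

section aux
open Finset
variable {n : ℕ}

lemma quad_sub (R1 R2 : Fin n → Fin n → Fin n → Fin n → ℂ) (c : ℂ)
    (u v x y : EuclideanSpace ℂ (Fin n)) :
    chernQuad (fun i j k l => R1 i j k l - c * R2 i j k l) u v x y
      = chernQuad R1 u v x y - c * chernQuad R2 u v x y := by
  unfold chernQuad
  rw [Finset.mul_sum, ← Finset.sum_sub_distrib]
  refine Finset.sum_congr rfl fun i _ => ?_
  rw [Finset.mul_sum, ← Finset.sum_sub_distrib]
  refine Finset.sum_congr rfl fun j _ => ?_
  rw [Finset.mul_sum, ← Finset.sum_sub_distrib]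
  refine Finset.sum_congr rfl fun k _ => ?_
  rw [Finset.mul_sum, ← Finset.sum_sub_distrib]
  refine Finset.sum_congr rfl fun l _ => ?_
  ring

lemma quad_conj (R : Fin n → Fin n → Fin n → Fin n → ℂ)
    (hsym : ∀ i j k l, (starRingEnd ℂ) (R i j k l) = R j i l k)
    (u v x y : EuclideanSpace ℂ (Fin n)) :
    (starRingEnd ℂ) (chernQuad R u v x y) = chernQuad R v u y x := by
  unfold chernQuad
  rw [map_sum, Finset.sum_comm]
  refine Finset.sum_congr rfl fun j _ => ?_
  rw [map_sum]
  refine Finset.sum_congr rfl fun i _ => ?_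
  rw [map_sum, Finset.sum_comm]
  refine Finset.sum_congr rfl fun l _ => ?_
  rw [map_sum]
  refine Finset.sum_congr rfl fun k _ => ?_
  simp only [map_mul, hsym, Complex.conj_conj]
  ring

lemma quad_single3 (R : Fin n → Fin n → Fin n → Fin n → ℂ)
    (u v y : EuclideanSpace ℂ (Fin n)) (k0 : Fin n) :
    chernQuad R u v (EuclideanSpace.single k0 1) y
      = ∑ i, ∑ j, ∑ l, R i j k0 l * u i * (starRingEnd ℂ) (v j) * (starRingEnd ℂ) (y l) := by
  unfold chernQuad
  refine Finset.sum_congr rfl fun i _ => Finset.sum_congr rfl fun j _ => ?_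
  rw [Finset.sum_comm]
  refine Finset.sum_congr rfl fun l _ => ?_
  simp [EuclideanSpace.single_apply, mul_ite, ite_mul, Finset.sum_ite_eq']

lemma quad_single4 (R : Fin n → Fin n → Fin n → Fin n → ℂ)
    (u v w : EuclideanSpace ℂ (Fin n)) (k0 : Fin n) :
    chernQuad R u v w (EuclideanSpace.single k0 1)
      = ∑ i, ∑ j, ∑ k, R i j k k0 * u i * (starRingEnd ℂ) (v j) * w k := by
  unfold chernQuad
  refine Finset.sum_congr rfl fun i _ => Finset.sum_congr rfl fun j _ =>
    Finset.sum_congr rfl fun k _ => ?_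
  simp [EuclideanSpace.single_apply, mul_ite, ite_mul, Finset.sum_ite_eq']

lemma quad_add1 (R : Fin n → Fin n → Fin n → Fin n → ℂ)
    (u u' v x y : EuclideanSpace ℂ (Fin n)) :
    chernQuad R (u + u') v x y = chernQuad R u v x y + chernQuad R u' v x y := by
  unfold chernQuad
  rw [← Finset.sum_add_distrib]
  refine Finset.sum_congr rfl fun i _ => ?_
  rw [← Finset.sum_add_distrib]
  refine Finset.sum_congr rfl fun j _ => ?_
  rw [← Finset.sum_add_distrib]
  refine Finset.sum_congr rfl fun k _ => ?_
  rw [← Finset.sum_add_distrib]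
  refine Finset.sum_congr rfl fun l _ => ?_
  have : (u + u') i = u i + u' i := rfl
  rw [this]; ring

lemma quad_smul1 (R : Fin n → Fin n → Fin n → Fin n → ℂ) (c : ℂ)
    (u v x y : EuclideanSpace ℂ (Fin n)) :
    chernQuad R (c • u) v x y = c * chernQuad R u v x y := by
  unfold chernQuad
  rw [Finset.mul_sum]
  refine Finset.sum_congr rfl fun i _ => ?_
  rw [Finset.mul_sum]
  refine Finset.sum_congr rfl fun j _ => ?_
  rw [Finset.mul_sum]
  refine Finset.sum_congr rfl fun k _ => ?_
  rw [Finset.mul_sum]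
  refine Finset.sum_congr rfl fun l _ => ?_
  have : (c • u) i = c * u i := rfl
  rw [this]; ring

lemma quad_add2 (R : Fin n → Fin n → Fin n → Fin n → ℂ)
    (u v v' x y : EuclideanSpace ℂ (Fin n)) :
    chernQuad R u (v + v') x y = chernQuad R u v x y + chernQuad R u v' x y := by
  unfold chernQuad
  rw [← Finset.sum_add_distrib]
  refine Finset.sum_congr rfl fun i _ => ?_
  rw [← Finset.sum_add_distrib]
  refine Finset.sum_congr rfl fun j _ => ?_
  rw [← Finset.sum_add_distrib]
  refine Finset.sum_congr rfl fun k _ => ?_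
  rw [← Finset.sum_add_distrib]
  refine Finset.sum_congr rfl fun l _ => ?_
  have : (v + v') j = v j + v' j := rfl
  rw [this, map_add]; ring

lemma quad_smul2 (R : Fin n → Fin n → Fin n → Fin n → ℂ) (c : ℂ)
    (u v x y : EuclideanSpace ℂ (Fin n)) :
    chernQuad R u (c • v) x y = (starRingEnd ℂ) c * chernQuad R u v x y := by
  unfold chernQuad
  rw [Finset.mul_sum]
  refine Finset.sum_congr rfl fun i _ => ?_
  rw [Finset.mul_sum]
  refine Finset.sum_congr rfl fun j _ => ?_
  rw [Finset.mul_sum]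
  refine Finset.sum_congr rfl fun k _ => ?_
  rw [Finset.mul_sum]
  refine Finset.sum_congr rfl fun l _ => ?_
  have : (c • v) j = c * v j := rfl
  rw [this, map_mul]; ring

lemma quad_sub3 (R : Fin n → Fin n → Fin n → Fin n → ℂ)
    (u v a b y : EuclideanSpace ℂ (Fin n)) :
    chernQuad R u v (a - b) y = chernQuad R u v a y - chernQuad R u v b y := by
  unfold chernQuad
  rw [← Finset.sum_sub_distrib]
  refine Finset.sum_congr rfl fun i _ => ?_
  rw [← Finset.sum_sub_distrib]
  refine Finset.sum_congr rfl fun j _ => ?_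
  rw [← Finset.sum_sub_distrib]
  refine Finset.sum_congr rfl fun k _ => ?_
  rw [← Finset.sum_sub_distrib]
  refine Finset.sum_congr rfl fun l _ => ?_
  have : (a - b) k = a k - b k := rfl
  rw [this]; ring

lemma quad_smul3 (R : Fin n → Fin n → Fin n → Fin n → ℂ) (c : ℂ)
    (u v a y : EuclideanSpace ℂ (Fin n)) :
    chernQuad R u v (c • a) y = c * chernQuad R u v a y := by
  unfold chernQuad
  rw [Finset.mul_sum]
  refine Finset.sum_congr rfl fun i _ => ?_
  rw [Finset.mul_sum]
  refine Finset.sum_congr rfl fun j _ => ?_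
  rw [Finset.mul_sum]
  refine Finset.sum_congr rfl fun k _ => ?_
  rw [Finset.mul_sum]
  refine Finset.sum_congr rfl fun l _ => ?_
  have : (c • a) k = c * a k := rfl
  rw [this]; ring

lemma quad_sub4 (R : Fin n → Fin n → Fin n → Fin n → ℂ)
    (u v w a b : EuclideanSpace ℂ (Fin n)) :
    chernQuad R u v w (a - b) = chernQuad R u v w a - chernQuad R u v w b := by
  unfold chernQuad
  rw [← Finset.sum_sub_distrib]
  refine Finset.sum_congr rfl fun i _ => ?_
  rw [← Finset.sum_sub_distrib]
  refine Finset.sum_congr rfl fun j _ => ?_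
  rw [← Finset.sum_sub_distrib]
  refine Finset.sum_congr rfl fun k _ => ?_
  rw [← Finset.sum_sub_distrib]
  refine Finset.sum_congr rfl fun l _ => ?_
  have : (a - b) l = a l - b l := rfl
  rw [this, map_sub]; ring

lemma quad_smul4 (R : Fin n → Fin n → Fin n → Fin n → ℂ) (c : ℂ)
    (u v w a : EuclideanSpace ℂ (Fin n)) :
    chernQuad R u v w (c • a) = (starRingEnd ℂ) c * chernQuad R u v w a := by
  unfold chernQuad
  rw [Finset.mul_sum]
  refine Finset.sum_congr rfl fun i _ => ?_
  rw [Finset.mul_sum]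
  refine Finset.sum_congr rfl fun j _ => ?_
  rw [Finset.mul_sum]
  refine Finset.sum_congr rfl fun k _ => ?_
  rw [Finset.mul_sum]
  refine Finset.sum_congr rfl fun l _ => ?_
  have : (c • a) l = c * a l := rfl
  rw [this, map_mul]; ring

lemma quadB (u v x y : EuclideanSpace ℂ (Fin n)) :
    chernQuad (fun i j k l => chernB i j k l) u v x y
      = (∑ i, u i * (starRingEnd ℂ) (v i)) * (∑ k, x k * (starRingEnd ℂ) (y k))
        + (∑ i, u i * (starRingEnd ℂ) (y i)) * (∑ k, x k * (starRingEnd ℂ) (v k)) := by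
  unfold chernQuad chernB
  simp only [add_mul, mul_ite, ite_mul, one_mul, mul_one, zero_mul, mul_zero,
    Finset.sum_add_distrib, Finset.sum_ite_eq, Finset.sum_ite_eq', Finset.mem_univ, if_true]
  congr 1
  · rw [Finset.sum_mul_sum]
    refine Finset.sum_congr rfl fun i _ => ?_
    rw [Finset.sum_comm]
    refine Finset.sum_congr rfl fun k _ => ?_
    simp [Finset.sum_ite_eq, mul_assoc]
  · rw [Finset.sum_mul_sum]
    refine Finset.sum_congr rfl fun i _ => ?_
    rw [Finset.sum_comm]
    refine Finset.sum_congr rfl fun k _ => ?_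
    rw [Finset.sum_comm]
    simp only [Finset.sum_ite_eq, Finset.mem_univ, if_true]
    simp [Finset.sum_ite_eq, mul_assoc, mul_comm, mul_left_comm]

lemma sum3 (R : Fin n → Fin n → Fin n → Fin n → ℂ)
    (u v x y : EuclideanSpace ℂ (Fin n)) :
    ∑ k, x k * chernQuad R u v (EuclideanSpace.single k 1) y = chernQuad R u v x y := by
  simp only [quad_single3, Finset.mul_sum]
  rw [Finset.sum_comm]
  refine Finset.sum_congr rfl fun i _ => ?_
  rw [Finset.sum_comm]
  refine Finset.sum_congr rfl fun j _ => ?_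
  exact Finset.sum_congr rfl fun k _ => Finset.sum_congr rfl fun l _ => by ring

lemma sum4 (R : Fin n → Fin n → Fin n → Fin n → ℂ)
    (u v w x : EuclideanSpace ℂ (Fin n)) :
    ∑ k, (starRingEnd ℂ) (x k) * chernQuad R u v w (EuclideanSpace.single k 1)
      = chernQuad R u v w x := by
  simp only [quad_single4, Finset.mul_sum]
  rw [Finset.sum_comm]
  refine Finset.sum_congr rfl fun i _ => ?_
  rw [Finset.sum_comm]
  refine Finset.sum_congr rfl fun j _ => ?_
  rw [Finset.sum_comm]
  refine Finset.sum_congr rfl fun k _ => ?_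
  exact Finset.sum_congr rfl fun l _ => by ring

lemma sum_self (w : EuclideanSpace ℂ (Fin n)) :
    ∑ i, w i * (starRingEnd ℂ) (w i) = ((‖w‖ ^ 2 : ℝ) : ℂ) := by
  have h : (inner ℂ w w : ℂ) = ∑ i, (starRingEnd ℂ) (w i) * w i := by
    rw [PiLp.inner_apply]; exact Finset.sum_congr rfl fun i _ => by rw [RCLike.inner_apply]; ring
  have h2 : (inner ℂ w w : ℂ) = ((‖w‖ : ℂ)) ^ 2 := inner_self_eq_norm_sq_to_K w
  calc ∑ i, w i * (starRingEnd ℂ) (w i) = ∑ i, (starRingEnd ℂ) (w i) * w i := by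
        exact Finset.sum_congr rfl fun i _ => mul_comm _ _
    _ = ((‖w‖ : ℂ)) ^ 2 := by rw [← h, h2]
    _ = ((‖w‖ ^ 2 : ℝ) : ℂ) := by push_cast; ring

lemma sum_cross_normSq_le (w x : EuclideanSpace ℂ (Fin n)) :
    Complex.normSq (∑ i, w i * (starRingEnd ℂ) (x i)) ≤ ‖w‖ ^ 2 * ‖x‖ ^ 2 := by
  have h : (starRingEnd ℂ) (∑ i, w i * (starRingEnd ℂ) (x i)) = (inner ℂ w x : ℂ) := by
    rw [map_sum, PiLp.inner_apply]
    refine Finset.sum_congr rfl fun i _ => ?_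
    simp [mul_comm]
  have h2 : Complex.normSq (∑ i, w i * (starRingEnd ℂ) (x i))
      = ‖(inner ℂ w x : ℂ)‖ ^ 2 := by
    rw [← h]
    rw [Complex.normSq_eq_norm_sq, ← Complex.norm_conj]
  rw [h2]
  have := norm_inner_le_norm (𝕜 := ℂ) w x
  nlinarith [norm_nonneg (inner ℂ w x : ℂ), norm_nonneg w, norm_nonneg x]

lemma cross_prod (w x : EuclideanSpace ℂ (Fin n)) :
    (∑ i, w i * (starRingEnd ℂ) (x i)) * (∑ k, x k * (starRingEnd ℂ) (w k))
      = ((Complex.normSq (∑ i, w i * (starRingEnd ℂ) (x i)) : ℝ) : ℂ) := by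
  have h : (∑ k, x k * (starRingEnd ℂ) (w k))
      = (starRingEnd ℂ) (∑ i, w i * (starRingEnd ℂ) (x i)) := by
    rw [map_sum]
    refine Finset.sum_congr rfl fun i _ => ?_
    simp [mul_comm]
  rw [h, Complex.mul_conj]

lemma quad_self_real (R : Fin n → Fin n → Fin n → Fin n → ℂ)
    (hsym : ∀ i j k l, (starRingEnd ℂ) (R i j k l) = R j i l k)
    (w x : EuclideanSpace ℂ (Fin n)) : (chernQuad R w w x x).im = 0 := by
  have h := quad_conj R hsym w w x x
  exact Complex.conj_eq_iff_im.mp h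

lemma trace_le (R : Fin n → Fin n → Fin n → Fin n → ℂ)
    (hG : ∀ X Y : EuclideanSpace ℂ (Fin n), (chernQuad R X X Y Y).re ≤ 0)
    (u x : EuclideanSpace ℂ (Fin n)) (hx : ‖x‖ = 1) :
    (∑ k, chernQuad R u u (EuclideanSpace.single k 1) (EuclideanSpace.single k 1)).re
      ≤ (chernQuad R u u x x).re := by
  set y : Fin n → EuclideanSpace ℂ (Fin n) :=
    fun k => EuclideanSpace.single k 1 - (starRingEnd ℂ) (x k) • x with hy
  have expand : ∀ k, chernQuad R u u (y k) (y k)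
      = chernQuad R u u (EuclideanSpace.single k 1) (EuclideanSpace.single k 1)
        - x k * chernQuad R u u (EuclideanSpace.single k 1) x
        - (starRingEnd ℂ) (x k) * chernQuad R u u x (EuclideanSpace.single k 1)
        + ((starRingEnd ℂ) (x k) * x k) * chernQuad R u u x x := by
    intro k
    rw [hy]
    simp only [quad_sub3, quad_sub4, quad_smul3, quad_smul4, Complex.conj_conj]
    ring
  have key : ∑ k, chernQuad R u u (y k) (y k)
      = ∑ k, chernQuad R u u (EuclideanSpace.single k 1) (EuclideanSpace.single k 1)
        - chernQuad R u u x x := by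
    rw [Finset.sum_congr rfl fun k _ => expand k]
    rw [Finset.sum_add_distrib, Finset.sum_sub_distrib, Finset.sum_sub_distrib]
    rw [sum3, sum4, ← Finset.sum_mul]
    have hs : ∑ k, (starRingEnd ℂ) (x k) * x k = 1 := by
      have : ∑ k, (starRingEnd ℂ) (x k) * x k = ∑ k, x k * (starRingEnd ℂ) (x k) :=
        Finset.sum_congr rfl fun k _ => mul_comm _ _
      rw [this, sum_self, hx]; norm_num
    rw [hs]; ring
  have hneg : (∑ k, chernQuad R u u (y k) (y k)).re ≤ 0 := by
    rw [Complex.re_sum]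
    exact Finset.sum_nonpos fun k _ => hG u (y k)
  rw [key] at hneg
  simp only [Complex.sub_re] at hneg
  linarith

lemma cs_lemma (R' : Fin n → Fin n → Fin n → Fin n → ℂ)
    (hsym' : ∀ i j k l, (starRingEnd ℂ) (R' i j k l) = R' j i l k)
    (x : EuclideanSpace ℂ (Fin n))
    (hneg : ∀ w : EuclideanSpace ℂ (Fin n), (chernQuad R' w w x x).re ≤ 0)
    (u v : EuclideanSpace ℂ (Fin n))
    (hc : (chernQuad R' v v x x).re < 0) :
    ‖chernQuad R' u v x x‖ ^ 2
      ≤ (chernQuad R' u u x x).re * (chernQuad R' v v x x).re := by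
  set b := chernQuad R' u v x x with hb
  set a := (chernQuad R' u u x x).re with ha
  set c := (chernQuad R' v v x x).re with hcdef
  have hc0 : c ≠ 0 := ne_of_lt hc
  set t : ℂ := -(b / (c : ℂ)) with ht
  have hvu : chernQuad R' v u x x = (starRingEnd ℂ) b := by
    rw [hb, ← quad_conj R' hsym' u v x x]
  have hexp : chernQuad R' (u + t • v) (u + t • v) x x
      = chernQuad R' u u x x + (starRingEnd ℂ) t * b + t * (starRingEnd ℂ) b
        + (t * (starRingEnd ℂ) t) * chernQuad R' v v x x := by
    rw [quad_add1, quad_add2, quad_add2, quad_smul1, quad_smul2, quad_smul2, quad_smul1, hvu, hb]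
    ring
  have h0 := hneg (u + t • v)
  rw [hexp] at h0
  have hima : (chernQuad R' u u x x).im = 0 := quad_self_real R' hsym' u x
  have himc : (chernQuad R' v v x x).im = 0 := quad_self_real R' hsym' v x
  have htre : t.re = -(b.re / c) := by
    rw [ht]; simp [Complex.div_ofReal_re]
  have htim : t.im = -(b.im / c) := by
    rw [ht]; simp [Complex.div_ofReal_im]
  have h0' : a + (t.re * b.re + t.im * b.im) + (t.re * b.re + t.im * b.im)
      + (t.re ^ 2 + t.im ^ 2) * c ≤ 0 := by
    have := h0
    simp only [Complex.add_re, Complex.mul_re, Complex.mul_im, Complex.conj_re,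
      Complex.conj_im, ← ha, ← hcdef, hima, himc] at this
    nlinarith [this]
  rw [htre, htim] at h0'
  have hN : ‖b‖ ^ 2 = b.re ^ 2 + b.im ^ 2 := by
    rw [Complex.sq_norm, Complex.normSq_apply]; ring
  rw [hN]
  set N := b.re ^ 2 + b.im ^ 2 with hNdef
  have hE : a + (-(b.re / c) * b.re + -(b.im / c) * b.im)
      + (-(b.re / c) * b.re + -(b.im / c) * b.im)
      + ((-(b.re / c)) ^ 2 + (-(b.im / c)) ^ 2) * c
      = a - (b.re ^ 2 + b.im ^ 2) / c := by
    field_simp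
    ring
  have h1 : a - N / c ≤ 0 := by rw [hNdef]; linarith [h0', hE]
  have h2 : N / c * c = N := div_mul_cancel₀ N hc0
  have h3 : 0 ≤ (N / c - a) * (-c) := mul_nonneg (by linarith) (by linarith)
  nlinarith [h3, h2]

lemma sum_normSq (w : EuclideanSpace ℂ (Fin n)) :
    ∑ k, Complex.normSq (w k) = ‖w‖ ^ 2 := by
  have h := sum_self w
  have h2 : ∑ i, w i * (starRingEnd ℂ) (w i) = ((∑ k, Complex.normSq (w k) : ℝ) : ℂ) := by
    push_cast
    exact Finset.sum_congr rfl fun i _ => (Complex.mul_conj (w i))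
  rw [h2] at h
  exact_mod_cast h

lemma chernB_conj (i j k l : Fin n) :
    (starRingEnd ℂ) (chernB i j k l) = chernB j i l k := by
  unfold chernB
  simp only [map_add, map_mul, apply_ite (starRingEnd ℂ), map_one, map_zero]
  have e1 : (if i = j then (1:ℂ) else 0) = (if j = i then 1 else 0) := by
    simp [eq_comm]
  have e2 : (if k = l then (1:ℂ) else 0) = (if l = k then 1 else 0) := by
    simp [eq_comm]
  have e3 : (if i = l then (1:ℂ) else 0) = (if l = i then 1 else 0) := by
    simp [eq_comm]
  have e4 : (if k = j then (1:ℂ) else 0) = (if j = k then 1 else 0) := by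
    simp [eq_comm]
  rw [e1, e2, e3, e4]
  ring

end aux
theorem cauchy_schwarz_ricci_eps_strict {n : ℕ} (hn : 2 ≤ n)
    (R : Fin n → Fin n → Fin n → Fin n → ℂ)
    (hsym : ∀ i j k l, (starRingEnd ℂ) (R i j k l) = R j i l k)
    (hGriffiths : ∀ X Y : EuclideanSpace ℂ (Fin n), (chernQuad R X X Y Y).re ≤ 0)
    (ε : ℝ) (hε : 0 < ε)
    (u v x : EuclideanSpace ℂ (Fin n)) (hu : u ≠ 0) (hv : v ≠ 0) (hx : ‖x‖ = 1) :
    ‖chernQuad (fun i j k l => R i j k l - ε * chernB i j k l) u v x x‖ ^ 2 <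
      chernRic (fun i j k l => R i j k l - ε * chernB i j k l) u *
        chernRic (fun i j k l => R i j k l - ε * chernB i j k l) v := by
  classical
  set Rε : Fin n → Fin n → Fin n → Fin n → ℂ :=
    fun i j k l => R i j k l - (ε : ℂ) * chernB i j k l with hRε
  have hx2 : ‖x‖ ^ 2 = 1 := by rw [hx]; norm_num
  have hsymε : ∀ i j k l, (starRingEnd ℂ) (Rε i j k l) = Rε j i l k := by
    intro i j k l
    simp only [hRε, map_sub, map_mul, hsym, chernB_conj, Complex.conj_ofReal]
  have hsplit : ∀ w z xx yy : EuclideanSpace ℂ (Fin n),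
      chernQuad Rε w z xx yy
        = chernQuad R w z xx yy
          - (ε : ℂ) * chernQuad (fun i j k l => chernB i j k l) w z xx yy :=
    fun w z xx yy => quad_sub R (fun i j k l => chernB i j k l) (ε : ℂ) w z xx yy
  -- real part of the ε-quadratic form
  have hqq : ∀ w : EuclideanSpace ℂ (Fin n), (chernQuad Rε w w x x).re
      = (chernQuad R w w x x).re
        - ε * (‖w‖ ^ 2 * ‖x‖ ^ 2 + Complex.normSq (∑ i, w i * (starRingEnd ℂ) (x i))) := by
    intro w
    rw [hsplit]
    have hB : chernQuad (fun i j k l => chernB i j k l) w w x x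
        = ((‖w‖ ^ 2 * ‖x‖ ^ 2
            + Complex.normSq (∑ i, w i * (starRingEnd ℂ) (x i)) : ℝ) : ℂ) := by
      rw [quadB, sum_self, sum_self, cross_prod]; push_cast; ring
    rw [hB, ← Complex.ofReal_mul, Complex.sub_re, Complex.ofReal_re]
  have hqqneg : ∀ w : EuclideanSpace ℂ (Fin n),
      (chernQuad Rε w w x x).re ≤ -(ε * ‖w‖ ^ 2) := by
    intro w
    have hG := hGriffiths w x
    have hZ := Complex.normSq_nonneg (∑ i, w i * (starRingEnd ℂ) (x i))
    rw [hqq w, hx2]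
    nlinarith [mul_nonneg hε.le hZ]
  have hqqneg0 : ∀ w : EuclideanSpace ℂ (Fin n), (chernQuad Rε w w x x).re ≤ 0 := by
    intro w
    have := hqqneg w
    nlinarith [mul_nonneg hε.le (sq_nonneg ‖w‖)]
  -- Ricci of the ε-tensor
  have hric : ∀ w : EuclideanSpace ℂ (Fin n), chernRic Rε w
      = (∑ k, chernQuad R w w (EuclideanSpace.single k 1) (EuclideanSpace.single k 1)).re
        - ε * ((n : ℝ) * ‖w‖ ^ 2 + ‖w‖ ^ 2) := by
    intro w
    unfold chernRic
    have hk : ∀ k : Fin n, chernQuad Rε w w (EuclideanSpace.single k 1) (EuclideanSpace.single k 1)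
        = chernQuad R w w (EuclideanSpace.single k 1) (EuclideanSpace.single k 1)
          - (ε : ℂ) * ((‖w‖ ^ 2 + Complex.normSq (w k) : ℝ) : ℂ) := by
      intro k
      rw [hsplit]
      have hBk : chernQuad (fun i j k' l => chernB i j k' l) w w
          (EuclideanSpace.single k 1) (EuclideanSpace.single k 1)
          = ((‖w‖ ^ 2 + Complex.normSq (w k) : ℝ) : ℂ) := by
        rw [quadB, sum_self]
        have e1 : ∑ m, (EuclideanSpace.single k (1:ℂ)) m
            * (starRingEnd ℂ) ((EuclideanSpace.single k (1:ℂ)) m) = 1 := by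
          simp [EuclideanSpace.single_apply, apply_ite (starRingEnd ℂ), mul_ite, ite_mul,
            Finset.sum_ite_eq']
        have e2 : ∑ i, w i * (starRingEnd ℂ) ((EuclideanSpace.single k (1:ℂ)) i) = w k := by
          simp [EuclideanSpace.single_apply, apply_ite (starRingEnd ℂ), mul_ite,
            Finset.sum_ite_eq']
        have e3 : ∑ m, (EuclideanSpace.single k (1:ℂ)) m * (starRingEnd ℂ) (w m)
            = (starRingEnd ℂ) (w k) := by
          simp [EuclideanSpace.single_apply, ite_mul, Finset.sum_ite_eq']
        rw [e1, e2, e3, Complex.mul_conj]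
        push_cast; ring
      rw [hBk]
    rw [Finset.sum_congr rfl fun k _ => hk k, Finset.sum_sub_distrib]
    simp only [← Finset.mul_sum, ← Complex.ofReal_sum]
    rw [← Complex.ofReal_mul]
    rw [Complex.sub_re, Complex.ofReal_re]
    congr 1
    rw [Finset.sum_add_distrib, sum_normSq, Finset.sum_const, Finset.card_univ,
      Fintype.card_fin, nsmul_eq_mul]
  -- strict comparison between Ricci and the quadratic form
  have hriclt : ∀ w : EuclideanSpace ℂ (Fin n), w ≠ 0 →
      chernRic Rε w < (chernQuad Rε w w x x).re := by
    intro w hw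
    have hWpos : 0 < ‖w‖ ^ 2 := pow_pos (norm_pos_iff.mpr hw) 2
    have hT := trace_le R hGriffiths w x hx
    have hZ : Complex.normSq (∑ i, w i * (starRingEnd ℂ) (x i)) ≤ ‖w‖ ^ 2 := by
      have := sum_cross_normSq_le w x
      rw [hx2] at this; linarith
    have hn2 : (2 : ℝ) ≤ (n : ℝ) := by exact_mod_cast hn
    rw [hric w, hqq w, hx2]
    have h1 : ε * Complex.normSq (∑ i, w i * (starRingEnd ℂ) (x i)) ≤ ε * ‖w‖ ^ 2 :=
      mul_le_mul_of_nonneg_left hZ hε.le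
    have h2 : ε * (2 * ‖w‖ ^ 2) ≤ ε * ((n : ℝ) * ‖w‖ ^ 2) :=
      mul_le_mul_of_nonneg_left (mul_le_mul_of_nonneg_right hn2 hWpos.le) hε.le
    nlinarith [mul_pos hε hWpos]
  -- put everything together
  have hupos : 0 < ‖u‖ ^ 2 := pow_pos (norm_pos_iff.mpr hu) 2
  have hvpos : 0 < ‖v‖ ^ 2 := pow_pos (norm_pos_iff.mpr hv) 2
  have hcneg : (chernQuad Rε v v x x).re < 0 :=
    lt_of_le_of_lt (hqqneg v) (by nlinarith [mul_pos hε hvpos])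
  have haneg : (chernQuad Rε u u x x).re < 0 :=
    lt_of_le_of_lt (hqqneg u) (by nlinarith [mul_pos hε hupos])
  have hCS := cs_lemma Rε hsymε x hqqneg0 u v hcneg
  have hA := hriclt u hu
  have hC := hriclt v hv
  have hRu : chernRic Rε u < 0 := lt_trans hA haneg
  have hRv : chernRic Rε v < 0 := lt_trans hC hcneg
  nlinarith [hCS, hA, hC, haneg, hcneg, hRu, hRv,
    mul_pos (sub_pos.2 hA) (neg_pos.2 hcneg),
    mul_pos (sub_pos.2 hC) (neg_pos.2 hRu)]
end

section
/- Let K > 0, c > 0, T > 0 and let f : ℝ → ℝ and f' : ℝ → ℝ be such that for every t ∈ [0,T]: f has derivative f'(t) at t within [0,T] (HasDerivWithinAt f (f' t) (Set.Icc 0 T) t), f(t) ≥ 0, and f'(t) ≤ 2c·(f t)^{3/2}. If f(0) ≤ K², then for every t ∈ [0,T] with t < 1/(c·K) one has f(t) ≤ (K⁻¹ − c·t)⁻². -/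
open Real Set

theorem ode_comparison_doubling_time
    (K c T : ℝ) (hK : 0 < K) (hc : 0 < c) (hT : 0 < T)
    (f f' : ℝ → ℝ)
    (hderiv : ∀ t ∈ Icc (0 : ℝ) T, HasDerivWithinAt f (f' t) (Icc (0 : ℝ) T) t)
    (hnonneg : ∀ t ∈ Icc (0 : ℝ) T, 0 ≤ f t)
    (hineq : ∀ t ∈ Icc (0 : ℝ) T, f' t ≤ 2 * c * (f t) ^ ((3 : ℝ) / 2))
    (h0 : f 0 ≤ K ^ 2) :
    ∀ t ∈ Icc (0 : ℝ) T, t < 1 / (c * K) → f t ≤ ((K⁻¹ - c * t) ^ 2)⁻¹ := by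
  intro t ht htlt
  rcases eq_or_lt_of_le ht.1 with h0t | h0t
  · subst h0t
    simpa [inv_pow, inv_inv] using h0
  -- t > 0
  have hct : c * t < K⁻¹ := by
    rw [lt_div_iff₀ (by positivity)] at htlt
    rw [show (K:ℝ)⁻¹ = 1 / K by rw [one_div], lt_div_iff₀ hK]
    nlinarith
  have hclt : c < 1 / (K * t) := by
    rw [lt_div_iff₀ (by positivity)]
    nlinarith [inv_mul_cancel₀ hK.ne']
  -- key estimate for c' slightly bigger than c
  have key : ∀ c' : ℝ, c < c' → c' * t < K⁻¹ → f t ≤ ((K⁻¹ - c' * t) ^ 2)⁻¹ := by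
    intro c' hcc' hc't
    have hc' : 0 < c' := hc.trans hcc'
    set B : ℝ → ℝ := fun x => ((K⁻¹ - c' * x) ^ 2)⁻¹ with hBdef
    set B' : ℝ → ℝ := fun x => -((-c') * (2 * (K⁻¹ - c' * x))) / ((K⁻¹ - c' * x) ^ 2) ^ 2
      with hB'def
    have hu : ∀ x ∈ Icc (0 : ℝ) t, 0 < K⁻¹ - c' * x := by
      intro x hx
      have : c' * x ≤ c' * t := mul_le_mul_of_nonneg_left hx.2 hc'.le
      linarith
    have hsub : Icc (0 : ℝ) t ⊆ Icc (0 : ℝ) T := Icc_subset_Icc le_rfl ht.2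
    have hfc : ContinuousOn f (Icc (0 : ℝ) t) := fun x hx =>
      ((hderiv x (hsub hx)).continuousWithinAt).mono hsub
    have hf' : ∀ x ∈ Ico (0 : ℝ) t, HasDerivWithinAt f (f' x) (Ici x) x := by
      intro x hx
      have hxT : x ∈ Icc (0 : ℝ) T := ⟨hx.1, hx.2.le.trans ht.2⟩
      exact (hderiv x hxT).mono_of_mem_nhdsWithin
        (Icc_mem_nhdsGE_of_mem ⟨hx.1, lt_of_lt_of_le hx.2 ht.2⟩)
    have hBd : ∀ x ∈ Icc (0 : ℝ) t, HasDerivAt B (B' x) x := by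
      intro x hx
      have h1 : HasDerivAt (fun y : ℝ => K⁻¹ - c' * y) (-c') x := by
        simpa using ((hasDerivAt_id x).const_mul c').const_sub K⁻¹
      have h2 : HasDerivAt (fun y : ℝ => (K⁻¹ - c' * y) ^ 2)
          ((-c') * (2 * (K⁻¹ - c' * x))) x := by
        exact (h1.pow 2).congr_deriv (by push_cast; ring)
      have hux := hu x hx
      exact h2.inv (by positivity)
    have hBc : ContinuousOn B (Icc (0 : ℝ) t) := fun x hx =>
      ((hBd x hx).continuousAt).continuousWithinAt
    have hB0 : f 0 ≤ B 0 := by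
      simpa [hBdef, inv_pow, inv_inv] using h0
    have bound : ∀ x ∈ Ico (0 : ℝ) t, f x = B x → f' x < B' x := by
      intro x hx hfB
      have hxt : x ∈ Icc (0 : ℝ) t := ⟨hx.1, hx.2.le⟩
      have hux : 0 < K⁻¹ - c' * x := hu x hxt
      set u : ℝ := K⁻¹ - c' * x with hudef
      have hfx : f x = (u ^ 2)⁻¹ := hfB
      have hrpow : (f x) ^ ((3 : ℝ) / 2) = (u ^ 3)⁻¹ := by
        rw [hfx, ← Real.rpow_natCast u 2, ← Real.rpow_neg_one (u ^ ((2:ℕ):ℝ)),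
          ← Real.rpow_natCast u 3]
        rw [← Real.rpow_mul hux.le, ← Real.rpow_mul (by positivity),
          ← Real.rpow_neg_one, ← Real.rpow_mul hux.le]
        norm_num
      have hfx' : f' x ≤ 2 * c * (u ^ 3)⁻¹ := by
        have := hineq x (hsub hxt)
        rwa [hrpow] at this
      have hB'x : B' x = 2 * c' * (u ^ 3)⁻¹ := by
        simp only [hB'def, ← hudef]
        field_simp
      rw [hB'x]
      refine lt_of_le_of_lt hfx' ?_
      have : (0:ℝ) < (u ^ 3)⁻¹ := by positivity
      nlinarith
    have := image_le_of_deriv_right_lt_deriv_boundary' hfc hf' hB0 hBc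
      (fun x hx => ((hBd x ⟨hx.1, hx.2.le⟩).hasDerivWithinAt)) bound
      (right_mem_Icc.2 h0t.le)
    simpa [hBdef] using this
  -- pass to the limit c' → c⁺
  have hcont : ContinuousAt (fun c' : ℝ => ((K⁻¹ - c' * t) ^ 2)⁻¹) c := by
    have hpos : 0 < K⁻¹ - c * t := sub_pos.2 hct
    have hne : ((K⁻¹ - c * t) ^ 2) ≠ 0 := by positivity
    exact (ContinuousAt.pow (by fun_prop) 2).inv₀ hne
  have htend : Filter.Tendsto (fun c' : ℝ => ((K⁻¹ - c' * t) ^ 2)⁻¹) (nhdsWithin c (Ioi c))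
      (nhds ((K⁻¹ - c * t) ^ 2)⁻¹) := hcont.continuousWithinAt.tendsto
  refine ge_of_tendsto htend ?_
  filter_upwards [Ioo_mem_nhdsGT_of_mem (left_mem_Ico.2 hclt)] with c' hc'
  exact key c' hc'.1 (by
    have := hc'.2
    rw [lt_div_iff₀ (by positivity)] at this
    nlinarith [inv_mul_cancel₀ hK.ne'])
end
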